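/- The C-step never increases the covariance determinant: given an h-subset H_old with mean μ_old and covariance Σ_old (assumed nonsingular), if H_new consists of the h observations with smallest Mahalanobis distances D(x_i; μ_old, Σ_old), then det(Σ_new) ≤ det(Σ_old), where (μ_new, Σ_new) are the mean and covariance of H_new, with equality if and only if (μ_new, Σ_new) = (μ_old, Σ_old). -/

import Mathlib

open Matrix Finset

section Aux

variable {p : ℕ}

/-- `v vᵀ` is positive semidefinite over ℝ. -/
lemma aux_psd_vecMulVec (v : Fin p → ℝ) : (vecMulVec v v).PosSemidef := by
  rw [Matrix.posSemidef_iff_dotProduct_mulVec]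
  constructor
  · ext i j
    simp [Matrix.conjTranspose_apply, vecMulVec_apply, mul_comm]
  · intro y
    have : star y ⬝ᵥ (vecMulVec v v *ᵥ y) = (v ⬝ᵥ y) * (v ⬝ᵥ y) := by
      simp only [star_trivial, dotProduct, mulVec, vecMulVec_apply, Finset.sum_mul,
        Finset.mul_sum]
      rw [Finset.sum_comm]
      exact Finset.sum_congr rfl fun i _ => Finset.sum_congr rfl fun j _ => by ring
    rw [this]
    exact mul_self_nonneg _

lemma aux_psd_smul {M : Matrix (Fin p) (Fin p) ℝ} (hM : M.PosSemidef) {c : ℝ} (hc : 0 ≤ c) :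
    (c • M).PosSemidef := by
  refine Matrix.posSemidef_iff_dotProduct_mulVec.mpr ⟨?_, fun y => ?_⟩
  · rw [Matrix.IsHermitian, Matrix.conjTranspose_smul, star_trivial, hM.1.eq]
  · rw [smul_mulVec, dotProduct_smul, smul_eq_mul]
    exact mul_nonneg hc (hM.dotProduct_mulVec_nonneg y)

lemma aux_psd_sum {ι : Type*} (s : Finset ι) (f : ι → Matrix (Fin p) (Fin p) ℝ)
    (hf : ∀ i ∈ s, (f i).PosSemidef) : (∑ i ∈ s, f i).PosSemidef := by
  classical
  induction s using Finset.induction_on with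
  | empty => simpa using Matrix.PosSemidef.zero
  | insert _ _ hn ih =>
    rw [Finset.sum_insert hn]
    exact ((hf _ (Finset.mem_insert_self _ _))).add
      (ih fun i hi => hf i (Finset.mem_insert_of_mem hi))

lemma aux_posDef_of_det {M : Matrix (Fin p) (Fin p) ℝ} (hM : M.PosSemidef)
    (hdet : IsUnit M.det) : M.PosDef := by
  refine Matrix.posDef_iff_dotProduct_mulVec.mpr ⟨hM.1, fun y hy => lt_of_le_of_ne (hM.dotProduct_mulVec_nonneg y) fun heq => hy ?_⟩
  have h0 : M *ᵥ y = 0 := (hM.dotProduct_mulVec_zero_iff y).mp heq.symm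
  calc y = (M⁻¹ * M) *ᵥ y := by rw [Matrix.nonsing_inv_mul _ hdet, Matrix.one_mulVec]
    _ = M⁻¹ *ᵥ (M *ᵥ y) := by rw [Matrix.mulVec_mulVec]
    _ = 0 := by rw [h0, Matrix.mulVec_zero]

lemma aux_det_nonneg {M : Matrix (Fin p) (Fin p) ℝ} (hM : M.PosSemidef) : 0 ≤ M.det := by
  rw [hM.1.det_eq_prod_eigenvalues]
  exact Finset.prod_nonneg fun i _ => by
    simpa [RCLike.ofReal_real_eq_id] using hM.eigenvalues_nonneg i

lemma aux_trace_eq_sum_eigenvalues {M : Matrix (Fin p) (Fin p) ℝ} (hM : M.IsHermitian) :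
    M.trace = ∑ i, hM.eigenvalues i := by
  have hu : (star (hM.eigenvectorUnitary : Matrix (Fin p) (Fin p) ℝ)) *
      (hM.eigenvectorUnitary : Matrix (Fin p) (Fin p) ℝ) = 1 :=
    Matrix.mem_unitaryGroup_iff'.mp hM.eigenvectorUnitary.2
  conv_lhs => rw [hM.spectral_theorem]
  rw [Unitary.conjStarAlgAut_apply, Matrix.trace_mul_comm, ← Matrix.mul_assoc, hu, Matrix.one_mul, Matrix.trace_diagonal]
  simp [RCLike.ofReal_real_eq_id]

/-- scalar AM-GM style: nonneg reals summing to at most `p` have product at most 1,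
with product 1 only if all are 1. -/
lemma aux_prod_le_one (l : Fin p → ℝ) (h0 : ∀ i, 0 ≤ l i) (hs : ∑ i, l i ≤ p) :
    (∏ i, l i ≤ 1) ∧ ((∏ i, l i) = 1 → ∀ i, l i = 1) := by
  have hle : ∀ i, l i ≤ Real.exp (l i - 1) := fun i => by
    have := Real.add_one_le_exp (l i - 1); linarith
  have hexp : ∏ i, Real.exp (l i - 1) = Real.exp (∑ i, (l i - 1)) := (Real.exp_sum _ _).symm
  have hsum : ∑ i, (l i - 1) ≤ 0 := by
    rw [Finset.sum_sub_distrib]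
    simp only [Finset.sum_const, Finset.card_univ, Fintype.card_fin, nsmul_eq_mul, mul_one]
    linarith
  have hexple : ∏ i, Real.exp (l i - 1) ≤ 1 := by
    rw [hexp]
    exact (Real.exp_le_exp.mpr hsum).trans_eq Real.exp_zero
  constructor
  · exact le_trans (Finset.prod_le_prod (fun i _ => h0 i) (fun i _ => hle i)) hexple
  · intro hp i
    by_contra hne
    have hpos : ∀ j ∈ Finset.univ, 0 < l j := by
      intro j _
      rcases (h0 j).lt_or_eq with h | h
      · exact h
      · exact absurd hp (by rw [Finset.prod_eq_zero (Finset.mem_univ j) h.symm]; norm_num)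
    have hstrict : l i < Real.exp (l i - 1) := by
      have := Real.add_one_lt_exp (x := l i - 1) (by intro hh; apply hne; linarith)
      linarith
    have : ∏ j, l j < ∏ j, Real.exp (l j - 1) :=
      Finset.prod_lt_prod (f := l) hpos (fun j _ => hle j) ⟨i, Finset.mem_univ i, hstrict⟩
    linarith [hexple]

open scoped MatrixOrder in
/-- determinant comparison: if `A` is pd, `S` psd and `tr(A⁻¹ S) ≤ p`, then
`det S ≤ det A`, with equality only if `S = A`. -/
lemma aux_det_le_det {A S : Matrix (Fin p) (Fin p) ℝ} (hA : A.PosDef) (hS : S.PosSemidef)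
    (htr : (A⁻¹ * S).trace ≤ p) : S.det ≤ A.det ∧ (S.det = A.det → S = A) := by
  set R := CFC.sqrt A with hRdef
  have hR2 : R * R = A := CFC.sqrt_mul_sqrt_self A hA.posSemidef.nonneg
  have hRpsd : R.PosSemidef := (CFC.sqrt_nonneg A).posSemidef
  have hdetA : 0 < A.det := hA.det_pos
  have hdetR2 : R.det * R.det = A.det := by rw [← Matrix.det_mul, hR2]
  have hdetRne : R.det ≠ 0 := by
    intro hc; rw [hc, mul_zero] at hdetR2; exact hdetA.ne hdetR2
  have hRunit : IsUnit R.det := hdetRne.isUnit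
  have hRinvH : R⁻¹ᴴ = R⁻¹ := by
    rw [Matrix.conjTranspose_nonsing_inv, hRpsd.1.eq]
  set M := R⁻¹ * S * R⁻¹ with hMdef
  have hMpsd : M.PosSemidef := by
    have := hS.mul_mul_conjTranspose_same R⁻¹
    rwa [hRinvH] at this
  have hRR : R⁻¹ * R⁻¹ = A⁻¹ := by rw [← Matrix.mul_inv_rev, hR2]
  have htrM : M.trace = (A⁻¹ * S).trace := by
    rw [hMdef, Matrix.trace_mul_comm, ← Matrix.mul_assoc, hRR]
  have hdetM : M.det = S.det * (A.det)⁻¹ := by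
    rw [hMdef, Matrix.det_mul, Matrix.det_mul, Matrix.det_nonsing_inv, Ring.inverse_eq_inv', ← hdetR2]
    field_simp
  have hl0 : ∀ i, 0 ≤ hMpsd.1.eigenvalues i := hMpsd.eigenvalues_nonneg
  have hlsum : ∑ i, hMpsd.1.eigenvalues i ≤ p := by
    rw [← aux_trace_eq_sum_eigenvalues hMpsd.1, htrM]; exact htr
  have hlprod : ∏ i, hMpsd.1.eigenvalues i = M.det := by
    rw [hMpsd.1.det_eq_prod_eigenvalues]; simp [RCLike.ofReal_real_eq_id]
  obtain ⟨hple, hpeq⟩ := aux_prod_le_one hMpsd.1.eigenvalues hl0 hlsum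
  have hMdetle : M.det ≤ 1 := hlprod ▸ hple
  constructor
  · have := mul_le_mul_of_nonneg_right hMdetle hdetA.le
    rw [hdetM, one_mul] at this
    calc S.det = S.det * (A.det)⁻¹ * A.det := by field_simp
      _ ≤ A.det := this
  · intro hdeq
    have hMdet1 : M.det = 1 := by rw [hdetM, hdeq]; field_simp
    have hl1 : ∀ i, hMpsd.1.eigenvalues i = 1 := hpeq (hlprod.trans hMdet1)
    have hM1 : M = 1 := by
      have hu : (hMpsd.1.eigenvectorUnitary : Matrix (Fin p) (Fin p) ℝ) *
          (star (hMpsd.1.eigenvectorUnitary : Matrix (Fin p) (Fin p) ℝ)) = 1 :=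
        Matrix.mem_unitaryGroup_iff.mp hMpsd.1.eigenvectorUnitary.2
      have hdiag : Matrix.diagonal (RCLike.ofReal ∘ hMpsd.1.eigenvalues) =
          (1 : Matrix (Fin p) (Fin p) ℝ) := by
        ext i j
        by_cases hij : i = j <;>
          simp [Matrix.one_apply, Matrix.diagonal_apply, hij, hl1,
            RCLike.ofReal_real_eq_id]
      conv_lhs => rw [hMpsd.1.spectral_theorem]
      rw [Unitary.conjStarAlgAut_apply, hdiag, Matrix.mul_one, hu]
    have : R * M * R = S := by
      rw [hMdef, ← Matrix.mul_assoc, ← Matrix.mul_assoc,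
        Matrix.mul_nonsing_inv _ hRunit, Matrix.one_mul, Matrix.mul_assoc,
        Matrix.nonsing_inv_mul _ hRunit, Matrix.mul_one]
    rw [← this, hM1, Matrix.mul_one, hR2]

/-- sum over the "selected" set is at most the sum over any set of the same size. -/
lemma aux_sum_le_sum {N : ℕ} (s t : Finset (Fin N)) (f : Fin N → ℝ)
    (hc : s.card = t.card) (hsel : ∀ i ∈ s, ∀ j ∉ s, f i ≤ f j) :
    ∑ i ∈ s, f i ≤ ∑ i ∈ t, f i := by
  classical
  have hsplit_s : ∑ i ∈ s \ t, f i + ∑ i ∈ s ∩ t, f i = ∑ i ∈ s, f i := by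
    rw [← Finset.sdiff_inter_self_left s t]
    exact Finset.sum_sdiff Finset.inter_subset_left
  have hsplit_t : ∑ i ∈ t \ s, f i + ∑ i ∈ t ∩ s, f i = ∑ i ∈ t, f i := by
    rw [← Finset.sdiff_inter_self_left t s]
    exact Finset.sum_sdiff Finset.inter_subset_left
  have hinter : s ∩ t = t ∩ s := Finset.inter_comm s t
  have hcard : (s \ t).card = (t \ s).card := by
    have h1 := Finset.card_inter_add_card_sdiff s t
    have h2 := Finset.card_inter_add_card_sdiff t s
    rw [hinter] at h1
    omega
  have hmain : ∑ i ∈ s \ t, f i ≤ ∑ i ∈ t \ s, f i := by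
    rcases Finset.eq_empty_or_nonempty (t \ s) with he | hne
    · have : s \ t = ∅ := Finset.card_eq_zero.mp (by rw [hcard, he, Finset.card_empty])
      rw [this, he]
    · obtain ⟨j0, hj0, hjeq⟩ := Finset.exists_mem_eq_inf' hne f
      have h1 : ∑ i ∈ s \ t, f i ≤ (s \ t).card • f j0 := by
        refine Finset.sum_le_card_nsmul _ _ _ fun i hi => ?_
        exact hsel i (Finset.mem_sdiff.mp hi).1 j0 (Finset.mem_sdiff.mp hj0).2
      have h2 : (t \ s).card • ((t \ s).inf' hne f) ≤ ∑ i ∈ t \ s, f i :=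
        Finset.card_nsmul_le_sum _ _ _ fun j hj => Finset.inf'_le f hj
      rw [← hjeq] at h1
      rw [hcard] at h1
      exact h1.trans h2
  linarith [hsplit_s, hsplit_t, hmain, hinter ▸ le_refl (∑ i ∈ s ∩ t, f i),
    show ∑ i ∈ s ∩ t, f i = ∑ i ∈ t ∩ s, f i from by rw [hinter]]

lemma aux_trace_mul_vecMulVec (M : Matrix (Fin p) (Fin p) ℝ) (u : Fin p → ℝ) :
    (M * vecMulVec u u).trace = u ⬝ᵥ (M *ᵥ u) := by
  simp only [Matrix.trace, Matrix.diag_apply, Matrix.mul_apply, vecMulVec_apply,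
    dotProduct, mulVec, Finset.mul_sum]
  exact Finset.sum_congr rfl fun i _ => Finset.sum_congr rfl fun j _ => by ring

/-- matrix determinant lemma specialization. -/
lemma aux_det_add_vecMulVec {B : Matrix (Fin p) (Fin p) ℝ} (hB : IsUnit B.det)
    (v : Fin p → ℝ) :
    (B + vecMulVec v v).det = B.det * (1 + v ⬝ᵥ (B⁻¹ *ᵥ v)) := by
  rw [vecMulVec_eq Unit v v, Matrix.det_add_replicateCol_mul_replicateRow hB v v]
  congr 1
  rw [Matrix.det_unique]
  simp only [Matrix.add_apply, Matrix.one_apply_eq, Matrix.mul_apply, Matrix.replicateRow_apply,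
    Matrix.replicateCol_apply, dotProduct, mulVec, Finset.sum_mul, Finset.mul_sum]
  congr 1
  rw [Finset.sum_comm]
  exact Finset.sum_congr rfl fun i _ => Finset.sum_congr rfl fun j _ => by ring

end Aux

/-- The C-step never increases the covariance determinant: if `Hnew` consists
of the `h` observations with smallest Mahalanobis distances with respect to
`(μold, Sigold)`, the mean and covariance of the old `h`-subset, then
`det Signew ≤ det Sigold`, with equality iff `(μnew, Signew) = (μold, Sigold)`. -/
theorem c_step_decreases_determinant {n p h : ℕ}
    (x : Fin n → Fin p → ℝ) (hh : h ≤ n) (hhpos : 0 < h)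
    (Hold Hnew : Finset (Fin n))
    (hHold : Hold.card = h) (hHnew : Hnew.card = h)
    (μold : Fin p → ℝ) (hμold : μold = (h : ℝ)⁻¹ • ∑ i ∈ Hold, x i)
    (Sigold : Matrix (Fin p) (Fin p) ℝ)
    (hSigold : Sigold = (h : ℝ)⁻¹ •
      ∑ i ∈ Hold, vecMulVec (x i - μold) (x i - μold))
    (hSignonsing : IsUnit Sigold.det)
    (hsel : ∀ i ∈ Hnew, ∀ j ∉ Hnew,
      Real.sqrt ((x i - μold) ⬝ᵥ (Sigold⁻¹ *ᵥ (x i - μold))) ≤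
        Real.sqrt ((x j - μold) ⬝ᵥ (Sigold⁻¹ *ᵥ (x j - μold))))
    (μnew : Fin p → ℝ) (hμnew : μnew = (h : ℝ)⁻¹ • ∑ i ∈ Hnew, x i)
    (Signew : Matrix (Fin p) (Fin p) ℝ)
    (hSignew : Signew = (h : ℝ)⁻¹ •
      ∑ i ∈ Hnew, vecMulVec (x i - μnew) (x i - μnew)) :
    Signew.det ≤ Sigold.det ∧
      (Signew.det = Sigold.det ↔ μnew = μold ∧ Signew = Sigold) := by
  have hh0 : (h : ℝ) ≠ 0 := Nat.cast_ne_zero.mpr hhpos.ne'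
  have hhinv0 : (0 : ℝ) ≤ (h : ℝ)⁻¹ := by positivity
  -- positive semidefiniteness of the old covariance matrix, hence posdef
  have hA_psd : Sigold.PosSemidef := by
    rw [hSigold]
    exact aux_psd_smul (aux_psd_sum _ _ fun i _ => aux_psd_vecMulVec _) hhinv0
  have hApd : Sigold.PosDef := aux_posDef_of_det hA_psd hSignonsing
  have hAinv_psd : Sigold⁻¹.PosSemidef := hA_psd.inv
  set q : Fin n → ℝ := fun i => (x i - μold) ⬝ᵥ (Sigold⁻¹ *ᵥ (x i - μold)) with hqdef
  have hq0 : ∀ i, 0 ≤ q i := fun i => by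
    simpa only [star_trivial] using hAinv_psd.dotProduct_mulVec_nonneg (x i - μold)
  -- selection gives pointwise comparison of squared distances
  have hsel' : ∀ i ∈ Hnew, ∀ j ∉ Hnew, q i ≤ q j := by
    intro i hi j hj
    have hs := hsel i hi j hj
    calc q i = Real.sqrt (q i) ^ 2 := (Real.sq_sqrt (hq0 i)).symm
      _ ≤ Real.sqrt (q j) ^ 2 := by
          exact pow_le_pow_left₀ (Real.sqrt_nonneg _) hs 2
      _ = q j := Real.sq_sqrt (hq0 j)
  -- sum of squared distances over the old subset equals h * p
  have hsum_old : ∑ i ∈ Hold, q i = (h : ℝ) * p := by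
    have hSsum : ∑ i ∈ Hold, vecMulVec (x i - μold) (x i - μold) = (h : ℝ) • Sigold := by
      rw [hSigold, smul_inv_smul₀ hh0]
    calc ∑ i ∈ Hold, q i
        = ∑ i ∈ Hold, (Sigold⁻¹ * vecMulVec (x i - μold) (x i - μold)).trace := by
          exact Finset.sum_congr rfl fun i _ => (aux_trace_mul_vecMulVec _ _).symm
      _ = (Sigold⁻¹ * ∑ i ∈ Hold, vecMulVec (x i - μold) (x i - μold)).trace := by
          rw [Matrix.mul_sum, Matrix.trace_sum]
      _ = (h : ℝ) * p := by
          rw [hSsum, Matrix.mul_smul, Matrix.trace_smul, Matrix.nonsing_inv_mul _ hSignonsing,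
            Matrix.trace_one]
          simp
  -- the intermediate matrix S
  set S : Matrix (Fin p) (Fin p) ℝ :=
    (h : ℝ)⁻¹ • ∑ i ∈ Hnew, vecMulVec (x i - μold) (x i - μold) with hSdef
  have hS_psd : S.PosSemidef :=
    aux_psd_smul (aux_psd_sum _ _ fun i _ => aux_psd_vecMulVec _) hhinv0
  -- trace bound
  have htrS : (Sigold⁻¹ * S).trace ≤ p := by
    have hsum_new : ∑ i ∈ Hnew, q i ≤ (h : ℝ) * p := by
      rw [← hsum_old]
      exact aux_sum_le_sum Hnew Hold q (by rw [hHnew, hHold]) hsel'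
    have htr_eq : (Sigold⁻¹ * S).trace = (h : ℝ)⁻¹ * ∑ i ∈ Hnew, q i := by
      rw [hSdef, Matrix.mul_smul, Matrix.trace_smul, smul_eq_mul]
      congr 1
      rw [Matrix.mul_sum, Matrix.trace_sum]
      exact Finset.sum_congr rfl fun i _ => aux_trace_mul_vecMulVec _ _
    rw [htr_eq]
    calc (h : ℝ)⁻¹ * ∑ i ∈ Hnew, q i ≤ (h : ℝ)⁻¹ * ((h : ℝ) * p) := by
          exact mul_le_mul_of_nonneg_left hsum_new hhinv0
      _ = p := by field_simp
  -- key decomposition S = Signew + v vᵀ with v = μnew - μold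
  have hsumx : ∀ c, ∑ i ∈ Hnew, x i c = (h : ℝ) * μnew c := by
    intro c
    rw [hμnew]
    simp only [Pi.smul_apply, Finset.sum_apply, smul_eq_mul]
    field_simp
  have hdecomp : S = Signew + vecMulVec (μnew - μold) (μnew - μold) := by
    have hkey : ∑ i ∈ Hnew, vecMulVec (x i - μold) (x i - μold)
        = (∑ i ∈ Hnew, vecMulVec (x i - μnew) (x i - μnew))
          + (h : ℝ) • vecMulVec (μnew - μold) (μnew - μold) := by
      ext a b
      simp only [Matrix.sum_apply, Matrix.add_apply, Matrix.smul_apply, vecMulVec_apply,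
        Pi.sub_apply, smul_eq_mul]
      have ha := hsumx a
      have hb := hsumx b
      have expand : ∀ μ : Fin p → ℝ, ∑ i ∈ Hnew, (x i a - μ a) * (x i b - μ b)
          = (∑ i ∈ Hnew, x i a * x i b) - μ b * ((h : ℝ) * μnew a)
            - μ a * ((h : ℝ) * μnew b) + (h : ℝ) * (μ a * μ b) := by
        intro μ
        rw [Finset.sum_congr rfl
          (g := fun i => x i a * x i b - x i a * μ b - μ a * x i b + μ a * μ b)
          (fun i _ => by ring)]
        rw [Finset.sum_add_distrib, Finset.sum_sub_distrib, Finset.sum_sub_distrib,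
          ← Finset.sum_mul, ← Finset.mul_sum, ha, hb, Finset.sum_const, hHnew,
          nsmul_eq_mul]
        ring
      rw [expand μold, expand μnew]
      ring
    rw [hSdef, hkey, smul_add, ← hSignew, smul_smul, inv_mul_cancel₀ hh0, one_smul]
  have hB_psd : Signew.PosSemidef := by
    rw [hSignew]
    exact aux_psd_smul (aux_psd_sum _ _ fun i _ => aux_psd_vecMulVec _) hhinv0
  obtain ⟨hdetS_le, hdetS_eq⟩ := aux_det_le_det hApd hS_psd htrS
  -- det Signew ≤ det S
  have hdetB_le_S : Signew.det ≤ S.det := by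
    by_cases hBu : IsUnit Signew.det
    · have hBpd : Signew.PosDef := aux_posDef_of_det hB_psd hBu
      have hq : 0 ≤ (μnew - μold) ⬝ᵥ (Signew⁻¹ *ᵥ (μnew - μold)) := by
        simpa using hB_psd.inv.dotProduct_mulVec_nonneg (μnew - μold)
      rw [hdecomp, aux_det_add_vecMulVec hBu]
      nlinarith [hBpd.det_pos]
    · have : Signew.det = 0 := by
        by_contra hc; exact hBu (Ne.isUnit hc)
      rw [this]
      exact aux_det_nonneg hS_psd
  refine ⟨hdetB_le_S.trans hdetS_le, ?_, ?_⟩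
  · -- equality implies (μnew, Signew) = (μold, Sigold)
    intro hEq
    have hSA : S.det = Sigold.det :=
      le_antisymm hdetS_le (hEq ▸ hdetB_le_S)
    have hSeqA : S = Sigold := hdetS_eq hSA
    have hBu : IsUnit Signew.det := by rw [hEq]; exact hSignonsing
    have hdetSB : S.det = Signew.det * (1 + (μnew - μold) ⬝ᵥ (Signew⁻¹ *ᵥ (μnew - μold))) := by
      rw [hdecomp]; exact aux_det_add_vecMulVec hBu _
    have hd0 : Signew.det ≠ 0 := by
      intro hc; rw [hc] at hBu; exact (by simpa using hBu : IsUnit (0:ℝ)).ne_zero rfl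
    have hqq : (μnew - μold) ⬝ᵥ (Signew⁻¹ *ᵥ (μnew - μold)) = 0 := by
      have hSdetB : S.det = Signew.det := hSA.trans hEq.symm
      have := hdetSB.symm.trans hSdetB
      have h1 : (1 : ℝ) + (μnew - μold) ⬝ᵥ (Signew⁻¹ *ᵥ (μnew - μold)) = 1 := by
        field_simp at this ⊢
        nlinarith [this]
      linarith
    have hv0 : μnew - μold = 0 := by
      have hmv : Signew⁻¹ *ᵥ (μnew - μold) = 0 := by
        have := (hB_psd.inv.dotProduct_mulVec_zero_iff (μnew - μold)).mp (by simpa using hqq)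
        exact this
      have : μnew - μold = (Signew * Signew⁻¹) *ᵥ (μnew - μold) := by
        rw [Matrix.mul_nonsing_inv _ hBu, Matrix.one_mulVec]
      rw [this, ← Matrix.mulVec_mulVec, hmv, Matrix.mulVec_zero]
    have hμeq : μnew = μold := by
      have := sub_eq_zero.mp hv0; exact this
    refine ⟨hμeq, ?_⟩
    have hvv0 : vecMulVec (μnew - μold) (μnew - μold) = 0 := by
      rw [hv0]; ext a b; simp [vecMulVec_apply]
    rw [← hSeqA, hdecomp, hvv0, add_zero]
  · -- converse
    rintro ⟨-, h2⟩
    rw [h2]
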